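/- Let (H,v) be a rooted finite simple graph. Then for any integers k ≥ 0 and g ≥ 1, X_{P^k(K_g,H)} = (g−1)! · Σ_{l=0}^{g−1} (1−l) · e_l · X_{H^{k+g−1−l}}. -/

import Mathlib

noncomputable section
open scoped Classical

/-- The chromatic symmetric function of a simple graph `G`, as a formal power
series over `ℚ` in countably many commuting variables indexed by the colors `ℕ`.
The coefficient of the monomial `∏ i, xᵢ ^ d i` is the number of proper
colorings `κ : V → ℕ` whose class of color `i` has exactly `d i` vertices. -/
def csf {V : Type} (G : SimpleGraph V) : MvPowerSeries ℕ ℚ :=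
  fun d : ℕ →₀ ℕ =>
    (Nat.card {κ : V → ℕ // (∀ a b : V, G.Adj a b → κ a ≠ κ b) ∧
        ∀ i : ℕ, Nat.card {v : V // κ v = i} = d i} : ℚ)

/-- The elementary symmetric function `eₖ`, as a formal power series:
the sum of all squarefree monomials of degree `k`. -/
def esymm (k : ℕ) : MvPowerSeries ℕ ℚ :=
  fun d : ℕ →₀ ℕ => if (∀ i, d i ≤ 1) ∧ d.support.card = k then 1 else 0

/-- `e_I = e_{i₁} ⋯ e_{i_l}` for a composition recorded as a list. -/
def eList (I : List ℕ) : MvPowerSeries ℕ ℚ := (I.map esymm).prod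

/-- The disjoint union of two simple graphs. -/
def disjSum {α β : Type} (G : SimpleGraph α) (H : SimpleGraph β) :
    SimpleGraph (α ⊕ β) where
  Adj x y := (∃ a b, G.Adj a b ∧ x = Sum.inl a ∧ y = Sum.inl b) ∨
             (∃ a b, H.Adj a b ∧ x = Sum.inr a ∧ y = Sum.inr b)
  symm := ⟨by
    rintro x y (⟨a, b, h, rfl, rfl⟩ | ⟨a, b, h, rfl, rfl⟩)
    · exact Or.inl ⟨b, a, h.symm, rfl, rfl⟩
    · exact Or.inr ⟨b, a, h.symm, rfl, rfl⟩⟩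
  loopless := ⟨by
    rintro x (⟨a, b, h, rfl, hy⟩ | ⟨a, b, h, rfl, hy⟩) <;>
      · cases hy
        exact h.ne rfl⟩

/-- The quotient of a simple graph obtained by identifying vertices along the
equivalence relation generated by `r`; identified vertices are joined by an
edge in the quotient iff some pair of their representatives were adjacent. -/
def glue {α : Type} (G : SimpleGraph α) (r : α → α → Prop) :
    SimpleGraph (Quotient (Relation.EqvGen.setoid r)) where
  Adj x y := x ≠ y ∧ ∃ a b, G.Adj a b ∧ Quotient.mk _ a = x ∧ Quotient.mk _ b = y
  symm := ⟨by
    rintro x y ⟨hne, a, b, hab, rfl, rfl⟩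
    exact ⟨hne.symm, b, a, hab.symm, rfl, rfl⟩⟩
  loopless := ⟨fun x h => h.1 rfl⟩

/-- A rooted finite simple graph. -/
structure PtGraph : Type 1 where
  V : Type
  fin : Finite V
  graph : SimpleGraph V
  root : V

attribute [instance] PtGraph.fin

/-- The chromatic symmetric function of a rooted graph. -/
def PtGraph.csf (G : PtGraph) : MvPowerSeries ℕ ℚ := _root_.csf G.graph

/-- The rooted one-vertex graph `K₁`. -/
def PtGraph.K1 : PtGraph := ⟨PUnit, inferInstance, ⊥, PUnit.unit⟩

/-- The identifications performed when conjoining two rooted graphs by a path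
of length `k`: the first end of a path with `k+1` vertices is glued to the
root of `G` and the last end to the root of `H`. -/
def pcRel (k : ℕ) (G H : PtGraph) :
    (G.V ⊕ (Fin (k + 1) ⊕ H.V)) → (G.V ⊕ (Fin (k + 1) ⊕ H.V)) → Prop :=
  fun x y =>
    (x = Sum.inl G.root ∧ y = Sum.inr (Sum.inl 0)) ∨
    (x = Sum.inr (Sum.inl (Fin.last k)) ∧ y = Sum.inr (Sum.inr H.root))

/-- The path-conjoined graph `P^k(G,H)` of two rooted graphs `(G,u)`, `(H,v)`:
take the disjoint union of `G`, a path with `k+1` vertices and `H`, and glue the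
two ends of the path to `u` and to `v` respectively. (For `k = 0` the two roots
get identified.)  The resulting graph is rooted at (the image of) `v`. -/
def pathConjoin (k : ℕ) (G H : PtGraph) : PtGraph where
  V := Quotient (Relation.EqvGen.setoid (pcRel k G H))
  fin := inferInstance
  graph := glue (disjSum G.graph (disjSum (SimpleGraph.pathGraph (k + 1)) H.graph))
      (pcRel k G H)
  root := Quotient.mk _ (Sum.inr (Sum.inr H.root))

/-- The tailed graph `G^k = P^k(G, K₁)`. -/
def PtGraph.tail (G : PtGraph) (k : ℕ) : PtGraph := pathConjoin k G PtGraph.K1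

/-- The same graph with a new root. -/
def PtGraph.reroot (G : PtGraph) (w : G.V) : PtGraph := ⟨G.V, G.fin, G.graph, w⟩

/-- The spider-conjoined graph `S^τ(G₁, …, G_l)`: each rooted graph `Gᵢ` is
joined to a common center vertex by a path of length `τᵢ`.  The legs are
recorded as a list of pairs `(τᵢ, Gᵢ)`; the result is rooted at the center. -/
def spiderConjoin (legs : List (ℕ × PtGraph)) : PtGraph :=
  legs.foldr (fun p C => pathConjoin p.1 p.2 C) PtGraph.K1

/-- The 2-chain-conjoined graph `C^{gh}(G, M, H)` where the middle graph `M`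
has the two (distinct) roots `x` and `y`: a path of length `g` joins the root
of `G` to `x`, and a path of length `h` joins `y` to the root of `H`. -/
def chain2 (g h : ℕ) (G : PtGraph) {μ : Type} (finμ : Finite μ)
    (M : SimpleGraph μ) (x y : μ) (H : PtGraph) : PtGraph :=
  pathConjoin h ((pathConjoin g G ⟨μ, finμ, M, x⟩).reroot
    (Quotient.mk _ (Sum.inr (Sum.inr y)))) H

/-- The complete graph `K_m` as a rooted graph (on the vertex set
`Option (Fin (m-1))`, which has `m` elements for `m ≥ 1`), rooted at `none`. -/
def ptClique (m : ℕ) : PtGraph := ⟨Option (Fin (m - 1)), inferInstance, ⊤, none⟩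

/-- The cycle `Cₙ` on `Fin n`: `i` is adjacent to `i ± 1 (mod n)`.
For `n = 2` this is the complete graph `K₂`. -/
def cycAdj (n : ℕ) : SimpleGraph (Fin n) :=
  SimpleGraph.fromRel fun i j => ((i : ℕ) + 1) % n = (j : ℕ)

/-- The cycle `C_m` as a rooted graph (the vertex type `Fin (m - 1 + 1)` is
`Fin m` for `m ≥ 1` and is always nonempty), rooted at `0`. -/
def ptCycle (m : ℕ) : PtGraph :=
  ⟨Fin (m - 1 + 1), inferInstance, cycAdj (m - 1 + 1), 0⟩

/-- The finite set of all compositions of `n`, recorded as lists of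
positive integers summing to `n`. -/
def compositions : ℕ → Finset (List ℕ)
  | 0 => {([] : List ℕ)}
  | n + 1 =>
      (Finset.range (n + 1)).attach.biUnion fun k =>
        (compositions k.1).image fun I => (n + 1 - k.1) :: I
  decreasing_by exact Finset.mem_range.mp k.2

/-- `w_I = i₁ (i₂ - 1) (i₃ - 1) ⋯ (i_l - 1)`, with `w` of the empty
composition equal to `1`. -/
def wcomp : List ℕ → ℚ
  | [] => 1
  | a :: t => (a : ℚ) * (t.map fun i => (i : ℚ) - 1).prod

/-- `σ_I(a) = min { i₁ + ⋯ + i_k : 0 ≤ k ≤ ℓ(I), i₁ + ⋯ + i_k ≥ a }`. -/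
def sigmaComp (I : List ℕ) (a : ℕ) : ℕ :=
  ((((List.range (I.length + 1)).map fun k => (I.take k).sum).filter
    fun s => a ≤ s).foldr min I.sum)

/-- The `a`-surplus `Θ_I(a) = σ_I(a) - a` of a composition. -/
def thetaComp (I : List ℕ) (a : ℕ) : ℕ := sigmaComp I a - a

namespace S2
open Sum

def cnt {α : Type} (κ : α → ℕ) (i : ℕ) : ℕ := Nat.card {v : α // κ v = i}

def Cset {V : Type} (G : SimpleGraph V) (d : ℕ →₀ ℕ) : Type :=
  {κ : V → ℕ // (∀ a b : V, G.Adj a b → κ a ≠ κ b) ∧ ∀ i : ℕ, cnt κ i = d i}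

lemma csf_apply {V : Type} (G : SimpleGraph V) (d : ℕ →₀ ℕ) :
    csf G d = (Nat.card (Cset G d) : ℚ) := rfl

lemma coeff_apply (φ : MvPowerSeries ℕ ℚ) (d : ℕ →₀ ℕ) :
    MvPowerSeries.coeff d φ = φ d := rfl

def sumSubtype {α β : Type} (p : α ⊕ β → Prop) :
    {x : α ⊕ β // p x} ≃ {a : α // p (inl a)} ⊕ {b : β // p (inr b)} where
  toFun := fun x => match x with
    | ⟨inl a, h⟩ => inl ⟨a, h⟩
    | ⟨inr b, h⟩ => inr ⟨b, h⟩
  invFun := fun x => match x with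
    | inl ⟨a, h⟩ => ⟨inl a, h⟩
    | inr ⟨b, h⟩ => ⟨inr b, h⟩
  left_inv := by rintro ⟨a | b, h⟩ <;> rfl
  right_inv := by rintro (⟨a, h⟩ | ⟨b, h⟩) <;> rfl

lemma cnt_sum {α β : Type} [Finite α] [Finite β] (κ : α ⊕ β → ℕ) (i : ℕ) :
    cnt κ i = cnt (κ ∘ inl) i + cnt (κ ∘ inr) i := by
  unfold cnt
  rw [Nat.card_congr (sumSubtype (fun x => κ x = i)), Nat.card_sum]
  rfl

lemma cnt_inj {n : ℕ} (f : Fin n → ℕ) (hf : Function.Injective f) (i : ℕ) :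
    cnt f i = if i ∈ Finset.image f Finset.univ then 1 else 0 := by
  unfold cnt
  split
  · rename_i h
    obtain ⟨x, -, hx⟩ := Finset.mem_image.mp h
    have : Nonempty {v : Fin n // f v = i} := ⟨⟨x, hx⟩⟩
    have hs : Subsingleton {v : Fin n // f v = i} := by
      constructor; rintro ⟨a, ha⟩ ⟨b, hb⟩
      exact Subtype.ext (hf (ha.trans hb.symm))
    exact Nat.card_unique
  · rename_i h
    have : IsEmpty {v : Fin n // f v = i} := by
      constructor; rintro ⟨v, hv⟩
      exact h (Finset.mem_image.mpr ⟨v, Finset.mem_univ v, hv⟩)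
    exact Nat.card_of_isEmpty

lemma cnt_pos {α : Type} [Finite α] (κ : α → ℕ) (v : α) : 1 ≤ cnt κ (κ v) := by
  have : Nonempty {w : α // κ w = κ v} := ⟨⟨v, rfl⟩⟩
  exact Nat.card_pos

lemma card_sigma' {ι : Type} [Fintype ι] (f : ι → Type) [∀ i, Finite (f i)] :
    Nat.card (Σ i, f i) = ∑ i, Nat.card (f i) := by
  letI : ∀ i, Fintype (f i) := fun i => Fintype.ofFinite _
  rw [Nat.card_eq_fintype_card, Fintype.card_sigma]
  exact Finset.sum_congr rfl fun i _ => (Nat.card_eq_fintype_card).symm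

lemma card_subtype_sum {α : Type} [Fintype α] (q : α → Prop) [DecidablePred q] :
    Nat.card {x // q x} = ∑ x, if q x then 1 else 0 := by
  rw [Nat.card_eq_fintype_card, Fintype.card_subtype, Finset.card_filter]

lemma card_coe_finset (s : Finset ℕ) : Nat.card {x // x ∈ s} = s.card := by
  rw [Nat.card_eq_fintype_card, Fintype.card_coe]

lemma csf_congr {V W : Type} (e : V ≃ W) (G : SimpleGraph V) (G' : SimpleGraph W)
    (h : ∀ a b, G.Adj a b ↔ G'.Adj (e a) (e b)) : csf G = csf G' := by
  funext d
  unfold csf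
  norm_cast
  apply Nat.card_congr
  refine Equiv.subtypeEquiv (Equiv.arrowCongr e (Equiv.refl ℕ)) (fun κ => ?_)
  constructor
  · rintro ⟨hp, hs⟩
    constructor
    · intro a b hab
      have := hp (e.symm a) (e.symm b) ((h _ _).mpr (by simpa using hab))
      simpa using this
    · intro i
      rw [← hs i]
      exact Nat.card_congr (Equiv.subtypeEquiv e.symm fun w => Iff.rfl)
  · rintro ⟨hp, hs⟩
    constructor
    · intro a b hab
      have := hp (e a) (e b) ((h a b).mp hab)
      simpa using this
    · intro i
      rw [← hs i]
      exact Nat.card_congr (Equiv.subtypeEquiv e fun v => by simp)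

end S2
namespace S2
open Sum Relation

variable (H : PtGraph)

abbrev MV (m s : ℕ) : Type := H.V ⊕ (Fin m ⊕ Fin s)

def mrel (m s : ℕ) : MV H m s → MV H m s → Prop
  | inl a, inl b => H.graph.Adj a b
  | inl a, inr (inl i) => a = H.root ∧ (i : ℕ) = 0
  | inl a, inr (inr _) => m = 0 ∧ a = H.root
  | inr (inl i), inr (inl j) => (i : ℕ) + 1 = (j : ℕ)
  | inr (inl i), inr (inr _) => (i : ℕ) + 1 = m
  | inr (inr _), inr (inr _) => True
  | _, _ => False

def Mdl (m s : ℕ) : SimpleGraph (MV H m s) := SimpleGraph.fromRel (mrel H m s)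

lemma mdl_adj {m s : ℕ} {x y : MV H m s} :
    (Mdl H m s).Adj x y ↔ x ≠ y ∧ (mrel H m s x y ∨ mrel H m s y x) :=
  SimpleGraph.fromRel_adj _ x y

section Iso1

variable (k g : ℕ)

def f1 : Option (Fin (g - 1)) ⊕ (Fin (k + 1) ⊕ H.V) → MV H k (g - 1)
  | inl none => if _h : k = 0 then inl H.root else inr (inl ⟨k - 1, by omega⟩)
  | inl (some j) => inr (inr j)
  | inr (inl i) => if _h : (i : ℕ) = k then inl H.root
      else inr (inl ⟨k - 1 - (i : ℕ), by have := i.isLt; omega⟩)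
  | inr (inr a) => inl a

def s1 : MV H k (g - 1) → Option (Fin (g - 1)) ⊕ (Fin (k + 1) ⊕ H.V)
  | inl a => inr (inr a)
  | inr (inl t) => inr (inl ⟨k - 1 - (t : ℕ), by omega⟩)
  | inr (inr j) => inl (some j)

lemma f1_none0 (h : k = 0) : f1 H k g (inl none) = inl H.root := dif_pos h

lemma f1_none (h : ¬ k = 0) :
    f1 H k g (inl none) = inr (inl ⟨k - 1, by omega⟩) := dif_neg h

lemma f1_pathk (i : Fin (k + 1)) (h : (i : ℕ) = k) : f1 H k g (inr (inl i)) = inl H.root :=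
  dif_pos h

lemma f1_path (i : Fin (k + 1)) (h : ¬ (i : ℕ) = k) :
    f1 H k g (inr (inl i)) = inr (inl ⟨k - 1 - (i : ℕ), by have := i.isLt; omega⟩) :=
  dif_neg h

@[simp] lemma f1_some (j : Fin (g - 1)) : f1 H k g (inl (some j)) = inr (inr j) := rfl

@[simp] lemma f1_inrr (a : H.V) : f1 H k g (inr (inr a)) = inl a := rfl

lemma f1_s1 : ∀ w, f1 H k g (s1 H k g w) = w := by
  rintro (a | t | j)
  · rfl
  · have ht := t.isLt
    show f1 H k g (inr (inl ⟨k - 1 - (t : ℕ), by omega⟩)) = inr (inl t)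
    rw [f1_path H k g _ (by omega : ¬ (k - 1 - (t : ℕ) = k))]
    exact congrArg _ (congrArg _ (Fin.ext (by omega : k - 1 - (k - 1 - (t : ℕ)) = (t : ℕ))))
  · rfl

lemma f1_zero : f1 H k g (inr (inl 0)) = f1 H k g (inl none) := by
  by_cases hk : k = 0
  · rw [f1_pathk H k g 0 (by simp [hk]), f1_none0 H k g hk]
  · rw [f1_path H k g 0 (by simp; omega), f1_none H k g hk]
    exact congrArg _ (congrArg _ (Fin.ext (by simp : k - 1 - ((0 : Fin (k+1)) : ℕ) = k - 1)))

lemma f1_eqv {x y} (h : Relation.EqvGen (pcRel k (ptClique g) H) x y) :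
    f1 H k g x = f1 H k g y := by
  induction h with
  | rel a b hr =>
    rcases hr with ⟨rfl, rfl⟩ | ⟨rfl, rfl⟩
    · exact (f1_zero H k g).symm
    · erw [f1_pathk H k g _ (Fin.val_last k)]
      rfl
  | refl => rfl
  | symm _ _ _ ih => exact ih.symm
  | trans _ _ _ _ _ ih1 ih2 => exact ih1.trans ih2

lemma f1_sect : ∀ x, Relation.EqvGen (pcRel k (ptClique g) H) (s1 H k g (f1 H k g x)) x := by
  rintro ((_ | j) | i | a)
  · by_cases hk : k = 0
    · subst hk
      rw [f1_none0 H 0 g rfl]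
      show Relation.EqvGen _ (inr (inr H.root)) (inl none)
      refine Relation.EqvGen.trans _ (inr (inl (Fin.last 0))) _ ?_ ?_
      · exact Relation.EqvGen.symm _ _ (Relation.EqvGen.rel _ _ (Or.inr ⟨rfl, rfl⟩))
      · have h0 : Fin.last 0 = (0 : Fin 1) := rfl
        rw [h0]
        exact Relation.EqvGen.symm _ _ (Relation.EqvGen.rel _ _ (Or.inl ⟨rfl, rfl⟩))
    · rw [f1_none H k g hk]
      have hs : s1 H k g (inr (inl ⟨k - 1, by omega⟩)) = inr (inl (0 : Fin (k + 1))) := by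
        show inr (inl _) = _
        refine congrArg _ (congrArg _ (Fin.ext ?_))
        simp
      rw [hs]
      exact Relation.EqvGen.symm _ _ (Relation.EqvGen.rel _ _ (Or.inl ⟨rfl, rfl⟩))
  · exact Relation.EqvGen.refl _
  · by_cases hi : (i : ℕ) = k
    · rw [f1_pathk H k g i hi]
      rw [show i = Fin.last k from Fin.ext (by simp [hi])]
      exact Relation.EqvGen.symm _ _ (Relation.EqvGen.rel _ _ (Or.inr ⟨rfl, rfl⟩))
    · have hik := i.isLt
      rw [f1_path H k g i hi]
      have hs : s1 H k g (inr (inl ⟨k - 1 - (i : ℕ), by have := i.isLt; omega⟩)) = inr (inl i) := by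
        show inr (inl _) = _
        exact congrArg _ (congrArg _ (Fin.ext (by omega : k - 1 - (k - 1 - (i : ℕ)) = (i : ℕ))))
      rw [hs]
      exact Relation.EqvGen.refl _
  · exact Relation.EqvGen.refl _

lemma f1_eq_eqv {a x} (h : f1 H k g a = f1 H k g x) :
    Relation.EqvGen (pcRel k (ptClique g) H) a x := by
  refine Relation.EqvGen.trans _ _ _
    (Relation.EqvGen.symm _ _ (f1_sect H k g a)) ?_
  rw [h]
  exact f1_sect H k g x

def e1 : (pathConjoin k (ptClique g) H).V ≃ MV H k (g - 1) where
  toFun := Quotient.lift (f1 H k g) (fun _ _ hab => f1_eqv H k g hab)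
  invFun := fun w => Quotient.mk _ (s1 H k g w)
  left_inv := by
    refine Quotient.ind (fun x => ?_)
    exact Quotient.sound (f1_sect H k g x)
  right_inv := f1_s1 H k g

end Iso1

end S2
namespace S2
open Sum Relation SimpleGraph

section Iso1b

variable (H : PtGraph) (k g : ℕ)

abbrev base1 : SimpleGraph (Option (Fin (g - 1)) ⊕ (Fin (k + 1) ⊕ H.V)) :=
  disjSum (⊤ : SimpleGraph (Option (Fin (g - 1))))
    (disjSum (SimpleGraph.pathGraph (k + 1)) H.graph)

lemma keyA : ∀ x y, (base1 H k g).Adj x y →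
    (Mdl H k (g - 1)).Adj (f1 H k g x) (f1 H k g y) := by
  have hns : ∀ j : Fin (g - 1),
      (Mdl H k (g - 1)).Adj (f1 H k g (inl none)) (f1 H k g (inl (some j))) := by
    intro j
    by_cases hk : k = 0
    · rw [f1_none0 H k g hk, mdl_adj]
      exact ⟨by simp, Or.inl ⟨hk, rfl⟩⟩
    · rw [f1_none H k g hk]
      rw [mdl_adj]
      refine ⟨by simp, Or.inl ?_⟩
      show (k - 1) + 1 = k
      omega
  have hcons : ∀ i j : Fin (k + 1), (i : ℕ) + 1 = (j : ℕ) →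
      (Mdl H k (g - 1)).Adj (f1 H k g (inr (inl i))) (f1 H k g (inr (inl j))) := by
    intro i j hij
    have hi2 := i.isLt
    have hj2 := j.isLt
    by_cases hj : (j : ℕ) = k
    · rw [f1_pathk H k g j hj, f1_path H k g i (by omega), mdl_adj]
      refine ⟨by simp, Or.inr ⟨rfl, (by omega : k - 1 - (i : ℕ) = 0)⟩⟩
    · rw [f1_path H k g i (by omega), f1_path H k g j hj, mdl_adj]
      constructor
      · simp only [ne_eq, Sum.inr.injEq, Sum.inl.injEq, Fin.mk.injEq]
        omega
      · exact Or.inr (by omega : (k - 1 - (j : ℕ)) + 1 = k - 1 - (i : ℕ))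
  rintro x y (⟨a, b, hab, rfl, rfl⟩ | ⟨p, q, hpq, rfl, rfl⟩)
  · match a, b, hab with
    | none, none, hab => exact absurd rfl hab.ne
    | none, some j, hab => exact hns j
    | some j, none, hab => exact (hns j).symm
    | some i, some j, hab =>
      rw [mdl_adj]
      have hij : i ≠ j := by
        intro h; exact hab.ne (by rw [h])
      exact ⟨by simp [hij], Or.inl trivial⟩
  · rcases hpq with ⟨i, j, hij, rfl, rfl⟩ | ⟨a, b, hab, rfl, rfl⟩
    · rw [SimpleGraph.pathGraph_adj] at hij
      rcases hij with h | h
      · exact hcons i j h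
      · exact (hcons j i h).symm
    · rw [mdl_adj]
      exact ⟨by simp [hab.ne], Or.inl hab⟩

lemma keyB0 : ∀ w w', mrel H k (g - 1) w w' → w ≠ w' →
    ∃ a b, (base1 H k g).Adj a b ∧ f1 H k g a = w ∧ f1 H k g b = w' := by
  rintro (a | t | c) (a' | t' | c') hrel hne
  · -- H edge
    exact ⟨inr (inr a), inr (inr a'), Or.inr ⟨inr a, inr a', Or.inr ⟨a, a', hrel, rfl, rfl⟩,
      rfl, rfl⟩, rfl, rfl⟩
  · -- root to t_0
    obtain ⟨rfl, ht⟩ : a = H.root ∧ (t' : ℕ) = 0 := hrel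
    have hk : 1 ≤ k := by have := t'.isLt; omega
    refine ⟨inr (inl (Fin.last k)), inr (inl ⟨k - 1, by omega⟩), ?_, ?_, ?_⟩
    · refine Or.inr ⟨inl (Fin.last k), inl ⟨k - 1, by omega⟩,
        Or.inl ⟨Fin.last k, ⟨k - 1, by omega⟩, ?_, rfl, rfl⟩, rfl, rfl⟩
      rw [SimpleGraph.pathGraph_adj]
      right
      show (k - 1) + 1 = k
      omega
    · exact f1_pathk H k g _ (Fin.val_last k)
    · rw [f1_path H k g _ (by omega : ¬ (k - 1 = k))]
      exact congrArg _ (congrArg _ (Fin.ext (by omega : k - 1 - (k - 1) = (t' : ℕ))))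
  · -- root to clique (k = 0)
    obtain ⟨hk, rfl⟩ : k = 0 ∧ a = H.root := hrel
    refine ⟨inl none, inl (some c'), Or.inl ⟨none, some c', by simp, rfl, rfl⟩, ?_, rfl⟩
    exact f1_none0 H k g hk
  · exact hrel.elim
  · -- consecutive tail
    have hcons : (t : ℕ) + 1 = (t' : ℕ) := hrel
    have ht2 := t.isLt
    have ht2' := t'.isLt
    refine ⟨inr (inl ⟨k - 1 - (t : ℕ), by omega⟩), inr (inl ⟨k - 1 - (t' : ℕ), by omega⟩),
      ?_, ?_, ?_⟩
    · refine Or.inr ⟨inl _, inl _, Or.inl ⟨⟨k - 1 - (t : ℕ), by omega⟩,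
        ⟨k - 1 - (t' : ℕ), by omega⟩, ?_, rfl, rfl⟩, rfl, rfl⟩
      rw [SimpleGraph.pathGraph_adj]
      right
      show (k - 1 - (t' : ℕ)) + 1 = k - 1 - (t : ℕ)
      omega
    · rw [f1_path H k g _ (by omega : ¬ (k - 1 - (t : ℕ) = k))]
      exact congrArg _ (congrArg _ (Fin.ext (by omega : k - 1 - (k - 1 - (t : ℕ)) = (t : ℕ))))
    · rw [f1_path H k g _ (by omega : ¬ (k - 1 - (t' : ℕ) = k))]
      exact congrArg _ (congrArg _ (Fin.ext (by omega : k - 1 - (k - 1 - (t' : ℕ)) = (t' : ℕ))))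
  · -- tail end to clique
    have htk : (t : ℕ) + 1 = k := hrel
    refine ⟨inl none, inl (some c'), Or.inl ⟨none, some c', by simp, rfl, rfl⟩, ?_, rfl⟩
    rw [f1_none H k g (by omega)]
    exact congrArg _ (congrArg _ (Fin.ext (by omega : k - 1 = (t : ℕ))))
  · exact hrel.elim
  · exact hrel.elim
  · -- clique-clique
    have hcc : c ≠ c' := by
      intro h; exact hne (by rw [h])
    exact ⟨inl (some c), inl (some c'), Or.inl ⟨some c, some c', by simp [hcc], rfl, rfl⟩,
      rfl, rfl⟩

lemma keyB : ∀ w w', (Mdl H k (g - 1)).Adj w w' →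
    ∃ a b, (base1 H k g).Adj a b ∧ f1 H k g a = w ∧ f1 H k g b = w' := by
  intro w w' hadj
  rw [mdl_adj] at hadj
  obtain ⟨hne, h | h⟩ := hadj
  · exact keyB0 H k g w w' h hne
  · obtain ⟨a, b, hab, h1, h2⟩ := keyB0 H k g w' w h hne.symm
    exact ⟨b, a, hab.symm, h2, h1⟩

lemma adj1 : ∀ p q, (pathConjoin k (ptClique g) H).graph.Adj p q ↔
    (Mdl H k (g - 1)).Adj (e1 H k g p) (e1 H k g q) := by
  refine Quotient.ind (fun x => ?_)
  refine Quotient.ind (fun y => ?_)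
  constructor
  · rintro ⟨hne, a, b, hab, ha, hb⟩
    have ha' : f1 H k g a = f1 H k g x := f1_eqv H k g (Quotient.eq.mp ha)
    have hb' : f1 H k g b = f1 H k g y := f1_eqv H k g (Quotient.eq.mp hb)
    have hA := keyA H k g a b hab
    rw [ha', hb'] at hA
    exact hA
  · intro hadj
    have hadj' : (Mdl H k (g - 1)).Adj (f1 H k g x) (f1 H k g y) := hadj
    obtain ⟨a, b, hab, ha, hb⟩ := keyB H k g (f1 H k g x) (f1 H k g y) hadj'
    refine ⟨?_, a, b, hab, Quotient.sound (f1_eq_eqv H k g ha),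
      Quotient.sound (f1_eq_eqv H k g hb)⟩
    intro hxy
    exact hadj'.ne (f1_eqv H k g (Quotient.eq.mp hxy))

lemma iso1 : csf (pathConjoin k (ptClique g) H).graph = csf (Mdl H k (g - 1)) :=
  csf_congr (e1 H k g) _ _ (adj1 H k g)

end Iso1b

end S2
namespace S2
open Sum Relation

section Iso2

variable (H : PtGraph) (m : ℕ)

def f2 : H.V ⊕ (Fin (m + 1) ⊕ PUnit) → MV H m 0
  | inl a => inl a
  | inr (inl i) => if _h : (i : ℕ) = 0 then inl H.root
      else inr (inl ⟨(i : ℕ) - 1, by have := i.isLt; omega⟩)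
  | inr (inr _) => if _h : m = 0 then inl H.root else inr (inl ⟨m - 1, by omega⟩)

def s2 : MV H m 0 → H.V ⊕ (Fin (m + 1) ⊕ PUnit)
  | inl a => inl a
  | inr (inl t) => inr (inl ⟨(t : ℕ) + 1, by have := t.isLt; omega⟩)
  | inr (inr j) => j.elim0

lemma f2_zero (i : Fin (m + 1)) (h : (i : ℕ) = 0) : f2 H m (inr (inl i)) = inl H.root :=
  dif_pos h

lemma f2_pos (i : Fin (m + 1)) (h : ¬ (i : ℕ) = 0) :
    f2 H m (inr (inl i)) = inr (inl ⟨(i : ℕ) - 1, by have := i.isLt; omega⟩) :=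
  dif_neg h

lemma f2_pt0 (u : PUnit) (h : m = 0) : f2 H m (inr (inr u)) = inl H.root := dif_pos h

lemma f2_pt (u : PUnit) (h : ¬ m = 0) :
    f2 H m (inr (inr u)) = inr (inl ⟨m - 1, by omega⟩) := dif_neg h

@[simp] lemma f2_inl (a : H.V) : f2 H m (inl a) = inl a := rfl

lemma f2_s2 : ∀ w, f2 H m (s2 H m w) = w := by
  rintro (a | t | j)
  · rfl
  · have ht := t.isLt
    show f2 H m (inr (inl ⟨(t : ℕ) + 1, by omega⟩)) = inr (inl t)
    rw [f2_pos H m _ (by omega : ¬ ((t : ℕ) + 1 = 0))]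
    exact congrArg _ (congrArg _ (Fin.ext (by omega : (t : ℕ) + 1 - 1 = (t : ℕ))))
  · exact j.elim0

lemma f2_eqv {x y} (h : Relation.EqvGen (pcRel m H PtGraph.K1) x y) :
    f2 H m x = f2 H m y := by
  induction h with
  | rel a b hr =>
    rcases hr with ⟨rfl, rfl⟩ | ⟨rfl, rfl⟩
    · erw [f2_zero H m 0 (by simp)]
    · by_cases hm : m = 0
      · erw [f2_zero H m _ (by simp [hm])]
      · erw [f2_pos H m _ (by simp [hm])]
  | refl => rfl
  | symm _ _ _ ih => exact ih.symm
  | trans _ _ _ _ _ ih1 ih2 => exact ih1.trans ih2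

lemma f2_sect : ∀ x, Relation.EqvGen (pcRel m H PtGraph.K1) (s2 H m (f2 H m x)) x := by
  rintro (a | i | u)
  · exact Relation.EqvGen.refl _
  · by_cases hi0 : (i : ℕ) = 0
    · rw [f2_zero H m i hi0]
      rw [show i = (0 : Fin (m + 1)) from Fin.ext (by simp [hi0])]
      exact Relation.EqvGen.rel _ _ (Or.inl ⟨rfl, rfl⟩)
    · have hi2 := i.isLt
      rw [f2_pos H m i hi0]
      have hs : s2 H m (inr (inl ⟨(i : ℕ) - 1, by omega⟩)) = inr (inl i) := by
        show inr (inl _) = _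
        exact congrArg _ (congrArg _ (Fin.ext (by omega : (i : ℕ) - 1 + 1 = (i : ℕ))))
      rw [hs]
      exact Relation.EqvGen.refl _
  · by_cases hm : m = 0
    · subst hm
      rw [f2_pt0 H 0 u rfl]
      refine Relation.EqvGen.trans _ (inr (inl 0)) _
        (Relation.EqvGen.rel _ _ (Or.inl ⟨rfl, rfl⟩)) ?_
      rw [show (0 : Fin 1) = Fin.last 0 from rfl]
      exact Relation.EqvGen.rel _ _ (Or.inr ⟨rfl, rfl⟩)
    · rw [f2_pt H m u hm]
      have hs : s2 H m (inr (inl ⟨m - 1, by omega⟩)) = inr (inl (Fin.last m)) := by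
        show inr (inl _) = _
        refine congrArg _ (congrArg _ (Fin.ext ?_))
        show m - 1 + 1 = (Fin.last m : ℕ)
        simp
        omega
      rw [hs]
      exact Relation.EqvGen.rel _ _ (Or.inr ⟨rfl, rfl⟩)

lemma f2_eq_eqv {a x} (h : f2 H m a = f2 H m x) :
    Relation.EqvGen (pcRel m H PtGraph.K1) a x := by
  refine Relation.EqvGen.trans _ _ _
    (Relation.EqvGen.symm _ _ (f2_sect H m a)) ?_
  rw [h]
  exact f2_sect H m x

def e2 : (H.tail m).V ≃ MV H m 0 where
  toFun := Quotient.lift (f2 H m) (fun _ _ hab => f2_eqv H m hab)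
  invFun := fun w => Quotient.mk _ (s2 H m w)
  left_inv := by
    refine Quotient.ind (fun x => ?_)
    exact Quotient.sound (f2_sect H m x)
  right_inv := f2_s2 H m

abbrev base2 : SimpleGraph (H.V ⊕ (Fin (m + 1) ⊕ PUnit)) :=
  disjSum H.graph (disjSum (SimpleGraph.pathGraph (m + 1)) (⊥ : SimpleGraph PUnit))

lemma keyA2 : ∀ x y, (base2 H m).Adj x y →
    (Mdl H m 0).Adj (f2 H m x) (f2 H m y) := by
  have hcons : ∀ i j : Fin (m + 1), (i : ℕ) + 1 = (j : ℕ) →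
      (Mdl H m 0).Adj (f2 H m (inr (inl i))) (f2 H m (inr (inl j))) := by
    intro i j hij
    have hi2 := i.isLt
    have hj2 := j.isLt
    by_cases hi0 : (i : ℕ) = 0
    · rw [f2_zero H m i hi0, f2_pos H m j (by omega), mdl_adj]
      exact ⟨by simp, Or.inl ⟨rfl, (by omega : (j : ℕ) - 1 = 0)⟩⟩
    · rw [f2_pos H m i hi0, f2_pos H m j (by omega), mdl_adj]
      constructor
      · simp only [ne_eq, Sum.inr.injEq, Sum.inl.injEq, Fin.mk.injEq]
        omega
      · exact Or.inl (by omega : ((i : ℕ) - 1) + 1 = (j : ℕ) - 1)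
  rintro x y (⟨a, b, hab, rfl, rfl⟩ | ⟨p, q, hpq, rfl, rfl⟩)
  · rw [mdl_adj]
    exact ⟨by simp [hab.ne], Or.inl hab⟩
  · rcases hpq with ⟨i, j, hij, rfl, rfl⟩ | ⟨a, b, hab, rfl, rfl⟩
    · rw [SimpleGraph.pathGraph_adj] at hij
      rcases hij with h | h
      · exact hcons i j h
      · exact (hcons j i h).symm
    · exact hab.elim

lemma keyB02 : ∀ w w', mrel H m 0 w w' → w ≠ w' →
    ∃ a b, (base2 H m).Adj a b ∧ f2 H m a = w ∧ f2 H m b = w' := by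
  rintro (a | t | c) (a' | t' | c') hrel hne
  · exact ⟨inl a, inl a', Or.inl ⟨a, a', hrel, rfl, rfl⟩, rfl, rfl⟩
  · obtain ⟨rfl, ht⟩ : a = H.root ∧ (t' : ℕ) = 0 := hrel
    have hm : 1 ≤ m := by have := t'.isLt; omega
    refine ⟨inr (inl 0), inr (inl ⟨1, by omega⟩), ?_, ?_, ?_⟩
    · refine Or.inr ⟨inl 0, inl ⟨1, by omega⟩,
        Or.inl ⟨0, ⟨1, by omega⟩, ?_, rfl, rfl⟩, rfl, rfl⟩
      rw [SimpleGraph.pathGraph_adj]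
      left
      simp
    · exact f2_zero H m 0 (by simp)
    · rw [f2_pos H m _ (by omega : ¬ ((1 : ℕ) = 0))]
      exact congrArg _ (congrArg _ (Fin.ext (by omega : (1 : ℕ) - 1 = (t' : ℕ))))
  · exact c'.elim0
  · exact hrel.elim
  · have hcons : (t : ℕ) + 1 = (t' : ℕ) := hrel
    have ht2 := t.isLt
    have ht2' := t'.isLt
    refine ⟨inr (inl ⟨(t : ℕ) + 1, by omega⟩), inr (inl ⟨(t' : ℕ) + 1, by omega⟩), ?_, ?_, ?_⟩
    · refine Or.inr ⟨inl ⟨(t : ℕ) + 1, by omega⟩, inl ⟨(t' : ℕ) + 1, by omega⟩,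
        Or.inl ⟨⟨(t : ℕ) + 1, by omega⟩, ⟨(t' : ℕ) + 1, by omega⟩, ?_, rfl, rfl⟩, rfl, rfl⟩
      rw [SimpleGraph.pathGraph_adj]
      left
      show (t : ℕ) + 1 + 1 = (t' : ℕ) + 1
      omega
    · rw [f2_pos H m _ (by omega : ¬ ((t : ℕ) + 1 = 0))]
      exact congrArg _ (congrArg _ (Fin.ext (by omega : (t : ℕ) + 1 - 1 = (t : ℕ))))
    · rw [f2_pos H m _ (by omega : ¬ ((t' : ℕ) + 1 = 0))]
      exact congrArg _ (congrArg _ (Fin.ext (by omega : (t' : ℕ) + 1 - 1 = (t' : ℕ))))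
  · exact c'.elim0
  · exact c.elim0
  · exact c.elim0
  · exact c.elim0

lemma keyB2 : ∀ w w', (Mdl H m 0).Adj w w' →
    ∃ a b, (base2 H m).Adj a b ∧ f2 H m a = w ∧ f2 H m b = w' := by
  intro w w' hadj
  rw [mdl_adj] at hadj
  obtain ⟨hne, h | h⟩ := hadj
  · exact keyB02 H m w w' h hne
  · obtain ⟨a, b, hab, h1, h2⟩ := keyB02 H m w' w h hne.symm
    exact ⟨b, a, hab.symm, h2, h1⟩

lemma adj2 : ∀ p q, (H.tail m).graph.Adj p q ↔
    (Mdl H m 0).Adj (e2 H m p) (e2 H m q) := by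
  refine Quotient.ind (fun x => ?_)
  refine Quotient.ind (fun y => ?_)
  constructor
  · rintro ⟨hne, a, b, hab, ha, hb⟩
    have ha' : f2 H m a = f2 H m x := f2_eqv H m (Quotient.eq.mp ha)
    have hb' : f2 H m b = f2 H m y := f2_eqv H m (Quotient.eq.mp hb)
    have hA := keyA2 H m a b hab
    rw [ha', hb'] at hA
    exact hA
  · intro hadj
    have hadj' : (Mdl H m 0).Adj (f2 H m x) (f2 H m y) := hadj
    obtain ⟨a, b, hab, ha, hb⟩ := keyB2 H m (f2 H m x) (f2 H m y) hadj'
    refine ⟨?_, a, b, hab, Quotient.sound (f2_eq_eqv H m ha),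
      Quotient.sound (f2_eq_eqv H m hb)⟩
    intro hxy
    exact hadj'.ne (f2_eqv H m (Quotient.eq.mp hxy))

lemma iso2 : csf (H.tail m).graph = csf (Mdl H m 0) :=
  csf_congr (e2 H m) _ _ (adj2 H m)

end Iso2

end S2
namespace S2
open Sum

section Count

variable (H : PtGraph)

lemma cnt_eq_filter {α : Type} [Fintype α] (κ : α → ℕ) (i : ℕ) :
    cnt κ i = (Finset.univ.filter (fun v => κ v = i)).card := by
  rw [cnt, Nat.card_eq_fintype_card, Fintype.card_subtype]

lemma cnt_finSucc {m : ℕ} (φ : Fin (m + 1) → ℕ) (i : ℕ) :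
    cnt φ i = cnt (fun t : Fin m => φ t.castSucc) i +
      (if φ (Fin.last m) = i then 1 else 0) := by
  rw [cnt_eq_filter, cnt_eq_filter, Finset.card_filter, Finset.card_filter,
    Fin.sum_univ_castSucc]

lemma cnt_fin0 (φ : Fin 0 → ℕ) (i : ℕ) : cnt φ i = 0 := by
  have : IsEmpty {v : Fin 0 // φ v = i} := ⟨fun v => v.1.elim0⟩
  exact Nat.card_of_isEmpty

lemma cnt_congr {α : Type} {φ ψ : α → ℕ} (h : ∀ v, φ v = ψ v) (i : ℕ) :
    cnt φ i = cnt ψ i :=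
  congrArg (fun f => cnt f i) (funext h)

def endv : (m : ℕ) → MV H m 0
  | 0 => inl H.root
  | (m + 1) => inr (inl (Fin.last m))

@[simp] lemma endv_zero : endv H 0 = inl H.root := rfl
@[simp] lemma endv_succ (m : ℕ) : endv H (m + 1) = inr (inl (Fin.last m)) := rfl

def Pst (m j : ℕ) (d : ℕ →₀ ℕ) : Type :=
  {p : (MV H m 0 → ℕ) × Finset ℕ //
    (∀ a b, (Mdl H m 0).Adj a b → p.1 a ≠ p.1 b) ∧ p.2.card = j ∧
    ∀ i, cnt p.1 i + (if i ∈ p.2 then 1 else 0) = d i}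

def PstE (m j : ℕ) (d : ℕ →₀ ℕ) : Type :=
  {q : Pst H m j d // q.1.1 (endv H m) ∉ q.1.2}

def PstI (m j : ℕ) (d : ℕ →₀ ℕ) : Type :=
  {q : Pst H m j d // q.1.1 (endv H m) ∈ q.1.2}

lemma finite_colorings {V : Type} [Finite V] (P : (V → ℕ) → Prop) (d : ℕ →₀ ℕ)
    (hP : ∀ κ, P κ → ∀ i, cnt κ i ≤ d i) : Finite {κ : V → ℕ // P κ} := by
  have key : ∀ (κ : {κ : V → ℕ // P κ}) (v : V), κ.1 v ∈ d.support := by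
    intro κ v
    rw [Finsupp.mem_support_iff]
    have h1 := cnt_pos κ.1 v
    have h2 := hP κ.1 κ.2 (κ.1 v)
    omega
  refine Finite.of_injective
    (fun κ => fun v => (⟨κ.1 v, key κ v⟩ : {x // x ∈ d.support})) ?_
  intro κ κ' h
  apply Subtype.ext
  funext v
  exact congrArg Subtype.val (congrFun h v)

instance instFiniteCset {V : Type} [Finite V] (G : SimpleGraph V) (d : ℕ →₀ ℕ) :
    Finite (Cset G d) :=
  finite_colorings _ d (fun κ hκ i => le_of_eq (hκ.2 i))

instance instFinitePst (m j : ℕ) (d : ℕ →₀ ℕ) : Finite (Pst H m j d) := by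
  have key : ∀ (q : Pst H m j d) (v : MV H m 0), q.1.1 v ∈ d.support := by
    intro q v
    rw [Finsupp.mem_support_iff]
    have h1 := cnt_pos q.1.1 v
    have h2 := q.2.2.2 (q.1.1 v)
    have h3 : (if (q.1.1 v) ∈ q.1.2 then 1 else 0) ≤ 1 := by split <;> omega
    omega
  have key2 : ∀ q : Pst H m j d, q.1.2 ∈ d.support.powerset := by
    intro q
    rw [Finset.mem_powerset]
    intro i hi
    rw [Finsupp.mem_support_iff]
    have h2 := q.2.2.2 i
    rw [if_pos hi] at h2
    omega
  refine Finite.of_injective (fun q =>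
    (((fun v => (⟨q.1.1 v, key q v⟩ : {x // x ∈ d.support})),
      (⟨q.1.2, key2 q⟩ : {S // S ∈ d.support.powerset})) :
      (MV H m 0 → {x // x ∈ d.support}) × {S // S ∈ d.support.powerset})) ?_
  intro q q' h
  obtain ⟨h1, h2⟩ := Prod.ext_iff.mp h
  apply Subtype.ext
  apply Prod.ext
  · funext v
    exact congrArg Subtype.val (congrFun h1 v)
  · exact congrArg Subtype.val h2

instance instFinitePstE (m j : ℕ) (d : ℕ →₀ ℕ) : Finite (PstE H m j d) :=
  Subtype.finite

instance instFinitePstI (m j : ℕ) (d : ℕ →₀ ℕ) : Finite (PstI H m j d) :=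
  Subtype.finite

lemma pst_partition (m j : ℕ) (d : ℕ →₀ ℕ) :
    Nat.card (Pst H m j d) = Nat.card (PstE H m j d) + Nat.card (PstI H m j d) := by
  rw [← Nat.card_sum]
  apply Nat.card_congr
  exact ((Equiv.sumCompl (fun q : Pst H m j d => q.1.1 (endv H m) ∈ q.1.2)).symm.trans
    (Equiv.sumComm _ _))

def ι0 (k s : ℕ) : MV H k 0 → MV H k s
  | inl a => inl a
  | inr (inl t) => inr (inl t)
  | inr (inr x) => x.elim0

@[simp] lemma ι0_inl (k s : ℕ) (a : H.V) : ι0 H k s (inl a) = inl a := rfl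
@[simp] lemma ι0_tail (k s : ℕ) (t : Fin k) : ι0 H k s (inr (inl t)) = inr (inl t) := rfl

lemma ι0_inj (k s : ℕ) : Function.Injective (ι0 H k s) := by
  intro a b h
  rcases a with a | t | x
  · rcases b with b | t' | x'
    · simpa [ι0] using h
    · simp [ι0] at h
    · exact x'.elim0
  · rcases b with b | t' | x'
    · simp [ι0] at h
    · simpa [ι0] using h
    · exact x'.elim0
  · exact x.elim0

lemma mrel_ι0 {k s : ℕ} {a b : MV H k 0} (h : mrel H k 0 a b) :
    mrel H k s (ι0 H k s a) (ι0 H k s b) := by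
  rcases a with a | t | x
  · rcases b with b | t' | x'
    · exact h
    · exact h
    · exact x'.elim0
  · rcases b with b | t' | x'
    · exact h.elim
    · exact h
    · exact x'.elim0
  · exact x.elim0

lemma adj_ι0 {k s : ℕ} {a b : MV H k 0} (h : (Mdl H k 0).Adj a b) :
    (Mdl H k s).Adj (ι0 H k s a) (ι0 H k s b) := by
  rw [mdl_adj] at h ⊢
  obtain ⟨hne, h1 | h1⟩ := h
  · exact ⟨fun he => hne (ι0_inj H k s he), Or.inl (mrel_ι0 H h1)⟩
  · exact ⟨fun he => hne (ι0_inj H k s he), Or.inr (mrel_ι0 H h1)⟩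

lemma adj_end_clique (k s : ℕ) (x : Fin s) :
    (Mdl H k s).Adj (ι0 H k s (endv H k)) (inr (inr x)) := by
  rw [mdl_adj]
  cases k with
  | zero => exact ⟨by simp, Or.inl ⟨rfl, rfl⟩⟩
  | succ m =>
    refine ⟨by simp, Or.inl ?_⟩
    show (Fin.last m : ℕ) + 1 = m + 1
    simp

def ext1 (k s : ℕ) (κ₀ : MV H k 0 → ℕ) (f : Fin s → ℕ) : MV H k s → ℕ
  | inl a => κ₀ (inl a)
  | inr (inl t) => κ₀ (inr (inl t))
  | inr (inr x) => f x

lemma ext1_ι0 (k s : ℕ) (κ₀ : MV H k 0 → ℕ) (f : Fin s → ℕ) :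
    ∀ v, ext1 H k s κ₀ f (ι0 H k s v) = κ₀ v := by
  rintro (a | t | x)
  · rfl
  · rfl
  · exact x.elim0

lemma ext1_proper (k s : ℕ) (κ₀ : MV H k 0 → ℕ) (f : Fin s → ℕ)
    (hκ : ∀ a b, (Mdl H k 0).Adj a b → κ₀ a ≠ κ₀ b) (hf : Function.Injective f)
    (hend : ∀ x, f x ≠ κ₀ (endv H k)) :
    ∀ a b, (Mdl H k s).Adj a b → ext1 H k s κ₀ f a ≠ ext1 H k s κ₀ f b := by
  have main : ∀ a b, mrel H k s a b → a ≠ b →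
      ext1 H k s κ₀ f a ≠ ext1 H k s κ₀ f b := by
    rintro (a | t | x) (b | t' | x') hr hne
    · exact hκ _ _ ((mdl_adj H).mpr ⟨by simpa using hne, Or.inl hr⟩)
    · exact hκ _ _ ((mdl_adj H).mpr ⟨by simp, Or.inl hr⟩)
    · obtain ⟨hk, rfl⟩ : k = 0 ∧ a = H.root := hr
      subst hk
      exact fun he => hend x' he.symm
    · exact hr.elim
    · exact hκ _ _ ((mdl_adj H).mpr ⟨by simpa using hne, Or.inl hr⟩)
    · have htk : (t : ℕ) + 1 = k := hr
      cases k with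
      | zero => exact t.elim0
      | succ m =>
        have ht : t = Fin.last m := Fin.ext (by simpa using htk)
        rw [ht]
        exact fun he => hend x' he.symm
    · exact hr.elim
    · exact hr.elim
    · refine fun he => ?_
      have : x = x' := hf he
      exact hne (by rw [this])
  intro a b hab
  rw [mdl_adj] at hab
  obtain ⟨hne, h | h⟩ := hab
  · exact main a b h hne
  · exact (main b a h hne.symm).symm

lemma sizes_split (k s : ℕ) (κ : MV H k s → ℕ)
    (hinj : Function.Injective (fun x : Fin s => κ (inr (inr x)))) (i : ℕ) :
    cnt κ i = cnt (fun v => κ (ι0 H k s v)) i +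
      (if i ∈ Finset.image (fun x : Fin s => κ (inr (inr x))) Finset.univ then 1 else 0) := by
  have e1 : cnt κ i = cnt (κ ∘ inl) i + (cnt (fun t : Fin k => κ (inr (inl t))) i +
      cnt (fun x : Fin s => κ (inr (inr x))) i) := by
    rw [cnt_sum κ i, cnt_sum (κ ∘ inr) i]
    rfl
  have e2 : cnt (fun x : Fin s => κ (inr (inr x))) i =
      if i ∈ Finset.image (fun x : Fin s => κ (inr (inr x))) Finset.univ then 1 else 0 :=
    cnt_inj _ hinj i
  have e3 : cnt (fun v => κ (ι0 H k s v)) i =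
      cnt (κ ∘ inl) i + cnt (fun t : Fin k => κ (inr (inl t))) i := by
    rw [cnt_sum (fun v => κ (ι0 H k s v)) i, cnt_sum ((fun v => κ (ι0 H k s v)) ∘ inr) i,
      cnt_fin0 (((fun v => κ (ι0 H k s v)) ∘ inr) ∘ inr) i]
    rfl
  omega

def Fib (s : ℕ) (S : Finset ℕ) : Type :=
  {f : Fin s → ℕ // Function.Injective f ∧ ∀ x, f x ∈ S}

instance instFiniteFib (s : ℕ) (S : Finset ℕ) : Finite (Fib s S) := by
  refine Finite.of_injective
    (fun f => fun x => (⟨f.1 x, f.2.2 x⟩ : {y // y ∈ S})) ?_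
  intro f f' h
  apply Subtype.ext
  funext x
  exact congrArg Subtype.val (congrFun h x)

lemma card_fib (s : ℕ) (S : Finset ℕ) (h : S.card = s) :
    Nat.card (Fib s S) = s.factorial := by
  have e : Fib s S ≃ (Fin s ≃ {x // x ∈ S}) := {
    toFun := fun f => Equiv.ofBijective (fun x => (⟨f.1 x, f.2.2 x⟩ : {x // x ∈ S}))
      (by
        rw [Fintype.bijective_iff_injective_and_card]
        constructor
        · intro x y hxy
          exact f.2.1 (congrArg Subtype.val hxy)
        · simp [h])
    invFun := fun e => ⟨fun x => (e x).1, fun x y hxy => e.injective (Subtype.ext hxy),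
      fun x => (e x).2⟩
    left_inv := fun f => Subtype.ext (funext fun x => rfl)
    right_inv := fun e => Equiv.ext (fun x => Subtype.ext rfl) }
  rw [Nat.card_congr e, Nat.card_eq_fintype_card,
    Fintype.card_equiv (Fintype.equivOfCardEq (by simp [h]))]
  simp

end Count

end S2
namespace S2
open Sum

section L1sec

variable (H : PtGraph) (k s : ℕ) (d : ℕ →₀ ℕ)

def cliqueIm (κ : MV H k s → ℕ) : Finset ℕ :=
  Finset.image (fun x : Fin s => κ (inr (inr x))) Finset.univ

lemma clique_inj (κ : Cset (Mdl H k s) d) :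
    Function.Injective (fun x : Fin s => κ.1 (inr (inr x))) := by
  intro x y hxy
  by_contra hne
  exact κ.2.1 (inr (inr x)) (inr (inr y))
    ((mdl_adj H).mpr ⟨by simpa using hne, Or.inl trivial⟩) hxy

lemma fib_image (S : Finset ℕ) (f : Fib s S) (hcard : S.card = s) :
    Finset.image f.1 Finset.univ = S := by
  refine Finset.eq_of_subset_of_card_le ?_ ?_
  · intro y hy
    obtain ⟨x, -, rfl⟩ := Finset.mem_image.mp hy
    exact f.2.2 x
  · rw [Finset.card_image_of_injective _ f.2.1, Finset.card_univ, Fintype.card_fin, hcard]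

def toL1 (κ : Cset (Mdl H k s) d) : Σ q : PstE H k s d, Fib s q.1.1.2 :=
  ⟨⟨⟨((fun v => κ.1 (ι0 H k s v)), cliqueIm H k s κ.1),
    ⟨fun a b h => κ.2.1 _ _ (adj_ι0 H h),
     by rw [cliqueIm, Finset.card_image_of_injective _ (clique_inj H k s d κ),
          Finset.card_univ, Fintype.card_fin],
     fun i => by
       show cnt (fun v => κ.1 (ι0 H k s v)) i +
         (if i ∈ cliqueIm H k s κ.1 then 1 else 0) = d i
       have h1 := κ.2.2 i
       have h2 := sizes_split H k s κ.1 (clique_inj H k s d κ) i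
       have hb : (if i ∈ cliqueIm H k s κ.1 then 1 else 0) =
         (if i ∈ Finset.image (fun x : Fin s => κ.1 (inr (inr x))) Finset.univ
           then 1 else 0) := rfl
       omega⟩⟩,
    by
      simp only [cliqueIm, Finset.mem_image]
      rintro ⟨x, -, hx⟩
      exact κ.2.1 _ _ (adj_end_clique H k s x) hx.symm⟩,
   ⟨fun x => κ.1 (inr (inr x)), clique_inj H k s d κ,
    fun x => Finset.mem_image_of_mem _ (Finset.mem_univ x)⟩⟩

def invL1 (p : Σ q : PstE H k s d, Fib s q.1.1.2) : Cset (Mdl H k s) d := by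
  refine ⟨ext1 H k s p.1.1.1.1 p.2.1, ?_, ?_⟩
  · refine ext1_proper H k s _ _ p.1.1.2.1 p.2.2.1 ?_
    intro x heq
    exact p.1.2 (heq ▸ p.2.2.2 x)
  · intro i
    have h2 := sizes_split H k s (ext1 H k s p.1.1.1.1 p.2.1)
      (p.2.2.1 : Function.Injective
        (fun x : Fin s => ext1 H k s p.1.1.1.1 p.2.1 (inr (inr x)))) i
    have h3 : cnt (fun v => ext1 H k s p.1.1.1.1 p.2.1 (ι0 H k s v)) i
        = cnt p.1.1.1.1 i := cnt_congr (ext1_ι0 H k s _ _) i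
    have h4 : Finset.image (fun x : Fin s => ext1 H k s p.1.1.1.1 p.2.1 (inr (inr x)))
        Finset.univ = p.1.1.1.2 := by
      rw [show (fun x : Fin s => ext1 H k s p.1.1.1.1 p.2.1 (inr (inr x))) = p.2.1 from rfl]
      exact fib_image s _ p.2 p.1.1.2.2.1
    rw [h2, h3, h4]
    exact p.1.1.2.2.2 i

lemma invL1_leftinv (κ : Cset (Mdl H k s) d) : invL1 H k s d (toL1 H k s d κ) = κ := by
  apply Subtype.ext
  funext v
  rcases v with a | t | x
  · rfl
  · rfl
  · rfl

lemma invL1_inj : Function.Injective (invL1 H k s d) := by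
  rintro ⟨⟨⟨⟨κ₀, S⟩, hP⟩, hE⟩, f, hf⟩ ⟨⟨⟨⟨κ₀', S'⟩, hP'⟩, hE'⟩, f', hf'⟩ h
  have hv : ext1 H k s κ₀ f = ext1 H k s κ₀' f' := congrArg Subtype.val h
  have hκ : κ₀ = κ₀' := by
    funext v
    rcases v with a | t | x
    · exact congrFun hv (inl a)
    · exact congrFun hv (inr (inl t))
    · exact x.elim0
  have hfe : f = f' := funext fun x => congrFun hv (inr (inr x))
  subst hκ
  subst hfe
  have hS : S = S' := by
    rw [← fib_image s S ⟨f, hf⟩ hP.2.1, ← fib_image s S' ⟨f, hf'⟩ hP'.2.1]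
  subst hS
  rfl

def equivL1 : Cset (Mdl H k s) d ≃ Σ q : PstE H k s d, Fib s q.1.1.2 where
  toFun := toL1 H k s d
  invFun := invL1 H k s d
  left_inv := invL1_leftinv H k s d
  right_inv := fun p => invL1_inj H k s d (invL1_leftinv H k s d (invL1 H k s d p))

lemma L1 : Nat.card (Cset (Mdl H k s) d) = s.factorial * Nat.card (PstE H k s d) := by
  rw [Nat.card_congr (equivL1 H k s d)]
  letI : Fintype (PstE H k s d) := Fintype.ofFinite _
  rw [card_sigma']
  have hfib : ∀ q : PstE H k s d, Nat.card (Fib s q.1.1.2) = s.factorial :=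
    fun q => card_fib s _ q.1.2.2.1
  rw [Finset.sum_congr rfl (fun q _ => hfib q), Finset.sum_const, Finset.card_univ,
    smul_eq_mul, Nat.card_eq_fintype_card, mul_comm]

end L1sec

end S2
namespace S2
open Sum

section L3sec

variable (H : PtGraph)

def ιt (m : ℕ) : MV H m 0 → MV H (m + 1) 0
  | inl a => inl a
  | inr (inl t) => inr (inl t.castSucc)
  | inr (inr x) => x.elim0

lemma ιt_inj (m : ℕ) : Function.Injective (ιt H m) := by
  intro a b h
  rcases a with a | t | x
  · rcases b with b | t' | x'
    · simpa [ιt] using h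
    · simp [ιt] at h
    · exact x'.elim0
  · rcases b with b | t' | x'
    · simp [ιt] at h
    · simp only [ιt, Sum.inr.injEq, Sum.inl.injEq] at h
      rw [Fin.castSucc_inj] at h
      rw [h]
    · exact x'.elim0
  · exact x.elim0

lemma mrel_ιt {m : ℕ} {a b : MV H m 0} (h : mrel H m 0 a b) :
    mrel H (m + 1) 0 (ιt H m a) (ιt H m b) := by
  rcases a with a | t | x
  · rcases b with b | t' | x'
    · exact h
    · exact ⟨h.1, by simp [h.2]⟩
    · exact x'.elim0
  · rcases b with b | t' | x'
    · exact h.elim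
    · show (t.castSucc : ℕ) + 1 = (t'.castSucc : ℕ)
      simpa [mrel] using h
    · exact x'.elim0
  · exact x.elim0

lemma adj_ιt {m : ℕ} {a b : MV H m 0} (h : (Mdl H m 0).Adj a b) :
    (Mdl H (m + 1) 0).Adj (ιt H m a) (ιt H m b) := by
  rw [mdl_adj] at h ⊢
  obtain ⟨hne, h1 | h1⟩ := h
  · exact ⟨fun he => hne (ιt_inj H m he), Or.inl (mrel_ιt H h1)⟩
  · exact ⟨fun he => hne (ιt_inj H m he), Or.inr (mrel_ιt H h1)⟩

lemma adj_last_end (m : ℕ) :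
    (Mdl H (m + 1) 0).Adj (inr (inl (Fin.last m))) (ιt H m (endv H m)) := by
  rw [mdl_adj]
  cases m with
  | zero =>
    refine ⟨by simp [ιt], Or.inr ⟨rfl, by simp⟩⟩
  | succ n =>
    constructor
    · simp only [endv_succ, ιt, ne_eq, Sum.inr.injEq, Sum.inl.injEq]
      rw [Fin.ext_iff]
      simp
    · refine Or.inr ?_
      show ((Fin.last n).castSucc : ℕ) + 1 = (Fin.last (n + 1) : ℕ)
      simp

def ext2 (m : ℕ) (κ : MV H m 0 → ℕ) (x : ℕ) : MV H (m + 1) 0 → ℕ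
  | inl a => κ (inl a)
  | inr (inl t) => if h : (t : ℕ) = m then x
      else κ (inr (inl ⟨(t : ℕ), by have := t.isLt; omega⟩))
  | inr (inr z) => z.elim0

lemma ext2_last (m : ℕ) (κ : MV H m 0 → ℕ) (x : ℕ) :
    ext2 H m κ x (inr (inl (Fin.last m))) = x := dif_pos (Fin.val_last m)

lemma ext2_mid (m : ℕ) (κ : MV H m 0 → ℕ) (x : ℕ) (t : Fin (m + 1)) (h : ¬ (t : ℕ) = m) :
    ext2 H m κ x (inr (inl t)) = κ (inr (inl ⟨(t : ℕ), by have := t.isLt; omega⟩)) :=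
  dif_neg h

lemma ext2_ιt (m : ℕ) (κ : MV H m 0 → ℕ) (x : ℕ) :
    ∀ v, ext2 H m κ x (ιt H m v) = κ v := by
  rintro (a | t | z)
  · rfl
  · have ht := t.isLt
    have hc : (t.castSucc : ℕ) = (t : ℕ) := Fin.coe_castSucc t
    show ext2 H m κ x (inr (inl t.castSucc)) = κ (inr (inl t))
    rw [ext2_mid H m κ x t.castSucc (by omega)]
    exact congrArg _ (congrArg _ (congrArg _ (Fin.ext (by omega : ((t.castSucc : ℕ)) = (t : ℕ)))))
  · exact z.elim0

lemma cnt_restrict (m : ℕ) (κ' : MV H (m + 1) 0 → ℕ) (i : ℕ) :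
    cnt κ' i = cnt (fun v => κ' (ιt H m v)) i +
      (if κ' (inr (inl (Fin.last m))) = i then 1 else 0) := by
  have e1 : cnt κ' i = cnt (κ' ∘ inl) i +
      cnt (fun t : Fin (m + 1) => κ' (inr (inl t))) i := by
    rw [cnt_sum κ' i, cnt_sum (κ' ∘ inr) i, cnt_fin0 ((κ' ∘ inr) ∘ inr) i]
    rfl
  have e4 : cnt (fun t : Fin (m + 1) => κ' (inr (inl t))) i
      = cnt (fun t : Fin m => κ' (inr (inl t.castSucc))) i
        + (if κ' (inr (inl (Fin.last m))) = i then 1 else 0) :=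
    cnt_finSucc (fun t : Fin (m + 1) => κ' (inr (inl t))) i
  have e3 : cnt (fun v => κ' (ιt H m v)) i
      = cnt (κ' ∘ inl) i + cnt (fun t : Fin m => κ' (inr (inl t.castSucc))) i := by
    rw [cnt_sum (fun v => κ' (ιt H m v)) i, cnt_sum ((fun v => κ' (ιt H m v)) ∘ inr) i,
      cnt_fin0 (((fun v => κ' (ιt H m v)) ∘ inr) ∘ inr) i]
    rfl
  omega

lemma ext2_proper (m : ℕ) (κ : MV H m 0 → ℕ) (x : ℕ)
    (hκ : ∀ a b, (Mdl H m 0).Adj a b → κ a ≠ κ b)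
    (hxe : x ≠ κ (endv H m)) :
    ∀ a b, (Mdl H (m + 1) 0).Adj a b → ext2 H m κ x a ≠ ext2 H m κ x b := by
  have main : ∀ a b, mrel H (m + 1) 0 a b → a ≠ b →
      ext2 H m κ x a ≠ ext2 H m κ x b := by
    rintro (a | t | z) (b | t' | z') hr hne
    · exact hκ _ _ ((mdl_adj H).mpr ⟨by simpa using hne, Or.inl hr⟩)
    · obtain ⟨rfl, ht0⟩ : a = H.root ∧ (t' : ℕ) = 0 := hr
      by_cases hm : (t' : ℕ) = m
      · have hm0 : m = 0 := by omega
        subst hm0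
        have hx2 : ext2 H 0 κ x (inr (inl t')) = x := dif_pos hm
        rw [hx2]
        exact fun he => hxe he.symm
      · rw [ext2_mid H m κ x t' hm]
        refine hκ _ _ ((mdl_adj H).mpr ⟨by simp, Or.inl ⟨rfl, ht0⟩⟩)
    · exact z'.elim0
    · exact hr.elim
    · have hcons : (t : ℕ) + 1 = (t' : ℕ) := hr
      have ht2 := t.isLt
      have ht2' := t'.isLt
      by_cases hm : (t' : ℕ) = m
      · have hx2 : ext2 H m κ x (inr (inl t')) = x := dif_pos hm
        rw [ext2_mid H m κ x t (by omega), hx2]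
        cases m with
        | zero => omega
        | succ n =>
          have hlast : (⟨(t : ℕ), by omega⟩ : Fin (n + 1)) = Fin.last n :=
            Fin.ext (by simp; omega)
          rw [hlast]
          exact fun he => hxe he.symm
      · rw [ext2_mid H m κ x t (by omega), ext2_mid H m κ x t' hm]
        refine hκ _ _ ((mdl_adj H).mpr ⟨?_, Or.inl ?_⟩)
        · simp only [ne_eq, Sum.inr.injEq, Sum.inl.injEq, Fin.mk.injEq]
          omega
        · show (t : ℕ) + 1 = (t' : ℕ)
          exact hcons
    · exact z'.elim0
    · exact z.elim0
    · exact z.elim0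
    · exact z.elim0
  intro a b hab
  rw [mdl_adj] at hab
  obtain ⟨hne, h | h⟩ := hab
  · exact main a b h hne
  · exact (main b a h hne.symm).symm

lemma cnt_ext2 (m : ℕ) (κ : MV H m 0 → ℕ) (x : ℕ) (i : ℕ) :
    cnt (ext2 H m κ x) i = cnt κ i + (if x = i then 1 else 0) := by
  rw [cnt_restrict H m (ext2 H m κ x) i, ext2_last H m κ x,
    cnt_congr (ext2_ιt H m κ x) i]

end L3sec

end S2
namespace S2
open Sum

section L3sec2

variable (H : PtGraph) (m j : ℕ) (d : ℕ →₀ ℕ)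

def toL3 (q' : PstE H (m + 1) j d) :
    Σ q : Pst H m (j + 1) d, {x : ℕ // x ∈ q.1.2 ∧ x ≠ q.1.1 (endv H m)} :=
  ⟨⟨((fun v => q'.1.1.1 (ιt H m v)),
      insert (q'.1.1.1 (inr (inl (Fin.last m)))) q'.1.1.2),
    ⟨fun a b h => q'.1.2.1 _ _ (adj_ιt H h),
     by
       have hni : q'.1.1.1 (inr (inl (Fin.last m))) ∉ q'.1.1.2 := q'.2
       rw [Finset.card_insert_of_notMem hni, q'.1.2.2.1],
     fun i => by
       show cnt (fun v => q'.1.1.1 (ιt H m v)) i +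
         (if i ∈ insert (q'.1.1.1 (inr (inl (Fin.last m)))) q'.1.1.2 then 1 else 0) = d i
       have hq := q'.1.2.2.2 i
       have hr := cnt_restrict H m q'.1.1.1 i
       have hins : (if i ∈ insert (q'.1.1.1 (inr (inl (Fin.last m)))) q'.1.1.2
             then 1 else 0)
           = (if q'.1.1.1 (inr (inl (Fin.last m))) = i then 1 else 0) +
             (if i ∈ q'.1.1.2 then 1 else 0) := by
         by_cases h1 : q'.1.1.1 (inr (inl (Fin.last m))) = i
         · have hni : q'.1.1.1 (inr (inl (Fin.last m))) ∉ q'.1.1.2 := q'.2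
           rw [← h1]
           simp [hni]
         · simp [Finset.mem_insert, h1, Ne.symm h1]
       omega⟩⟩,
   ⟨q'.1.1.1 (inr (inl (Fin.last m))),
    Finset.mem_insert_self _ _,
    q'.1.2.1 _ _ (adj_last_end H m)⟩⟩

def invL3 (p : Σ q : Pst H m (j + 1) d, {x : ℕ // x ∈ q.1.2 ∧ x ≠ q.1.1 (endv H m)}) :
    PstE H (m + 1) j d :=
  ⟨⟨(ext2 H m p.1.1.1 p.2.1, p.1.1.2.erase p.2.1),
    ⟨ext2_proper H m p.1.1.1 p.2.1 p.1.2.1 p.2.2.2,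
     by rw [Finset.card_erase_of_mem p.2.2.1, p.1.2.2.1]; omega,
     fun i => by
       show cnt (ext2 H m p.1.1.1 p.2.1) i +
         (if i ∈ p.1.1.2.erase p.2.1 then 1 else 0) = d i
       have hq := p.1.2.2.2 i
       have he := cnt_ext2 H m p.1.1.1 p.2.1 i
       have hsplit : (if p.2.1 = i then 1 else 0) +
           (if i ∈ p.1.1.2.erase p.2.1 then 1 else 0)
           = (if i ∈ p.1.1.2 then 1 else 0) := by
         by_cases h1 : p.2.1 = i
         · rw [← h1]
           simp [Finset.notMem_erase, p.2.2.1]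
         · simp [h1, Finset.mem_erase, Ne.symm h1]
       omega⟩⟩,
   by
     show ext2 H m p.1.1.1 p.2.1 (endv H (m + 1)) ∉ p.1.1.2.erase p.2.1
     have hl : ext2 H m p.1.1.1 p.2.1 (endv H (m + 1)) = p.2.1 := ext2_last H m _ _
     rw [hl]
     exact Finset.notMem_erase _ _⟩

lemma invL3_leftinv (q' : PstE H (m + 1) j d) : invL3 H m j d (toL3 H m j d q') = q' := by
  apply Subtype.ext
  apply Subtype.ext
  have h1 : ext2 H m (fun v => q'.1.1.1 (ιt H m v))
      (q'.1.1.1 (inr (inl (Fin.last m)))) = q'.1.1.1 := by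
    funext v
    rcases v with a | t | z
    · rfl
    · by_cases ht : (t : ℕ) = m
      · have h2 : ext2 H m (fun v => q'.1.1.1 (ιt H m v))
            (q'.1.1.1 (inr (inl (Fin.last m)))) (inr (inl t))
            = q'.1.1.1 (inr (inl (Fin.last m))) := dif_pos ht
        rw [h2, show t = Fin.last m from Fin.ext (by simp [ht])]
      · rw [ext2_mid H m _ _ t ht]
        exact congrArg q'.1.1.1 (by simp [ιt, Fin.ext_iff])
    · exact z.elim0
  have h3 : (insert (q'.1.1.1 (inr (inl (Fin.last m)))) q'.1.1.2).erase
      (q'.1.1.1 (inr (inl (Fin.last m)))) = q'.1.1.2 := Finset.erase_insert q'.2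
  show (ext2 H m (fun v => q'.1.1.1 (ιt H m v)) (q'.1.1.1 (inr (inl (Fin.last m)))),
      (insert (q'.1.1.1 (inr (inl (Fin.last m)))) q'.1.1.2).erase
        (q'.1.1.1 (inr (inl (Fin.last m))))) = q'.1.1
  rw [h1, h3]

lemma invL3_inj : Function.Injective (invL3 H m j d) := by
  rintro ⟨⟨⟨κ, S⟩, hq⟩, x, hx⟩ ⟨⟨⟨κ₂, S₂⟩, hq₂⟩, x₂, hx₂⟩ h
  have hpair := congrArg Subtype.val (congrArg Subtype.val h)
  have hv : ext2 H m κ x = ext2 H m κ₂ x₂ := congrArg Prod.fst hpair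
  have hT : S.erase x = S₂.erase x₂ := congrArg Prod.snd hpair
  have hx1 : x ∈ S := hx.1
  have hx21 : x₂ ∈ S₂ := hx₂.1
  have hx_eq : x = x₂ := by
    have hc := congrFun hv (inr (inl (Fin.last m)))
    rw [ext2_last H m κ x, ext2_last H m κ₂ x₂] at hc
    exact hc
  subst hx_eq
  have hκ : κ = κ₂ := by
    funext v
    have hc := congrFun hv (ιt H m v)
    rw [ext2_ιt H m κ x v, ext2_ιt H m κ₂ x v] at hc
    exact hc
  subst hκ
  have hS : S = S₂ := by
    rw [← Finset.insert_erase hx1, ← Finset.insert_erase hx21, hT]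
  subst hS
  rfl

def equivL3 : PstE H (m + 1) j d ≃
    Σ q : Pst H m (j + 1) d, {x : ℕ // x ∈ q.1.2 ∧ x ≠ q.1.1 (endv H m)} where
  toFun := toL3 H m j d
  invFun := invL3 H m j d
  left_inv := invL3_leftinv H m j d
  right_inv := fun p => invL3_inj H m j d (invL3_leftinv H m j d (invL3 H m j d p))

lemma L3 : Nat.card (PstE H (m + 1) j d) + Nat.card (PstI H m (j + 1) d)
    = (j + 1) * Nat.card (Pst H m (j + 1) d) := by
  letI : Fintype (Pst H m (j + 1) d) := Fintype.ofFinite _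
  letI : ∀ q : Pst H m (j + 1) d, Finite {x : ℕ // x ∈ q.1.2 ∧ x ≠ q.1.1 (endv H m)} :=
    fun q => Finite.of_injective
      (fun y => (⟨y.1, y.2.1⟩ : {x // x ∈ q.1.2}))
      (fun a b hab => Subtype.ext (by
        have h2 := congrArg Subtype.val hab
        exact h2))
  have h1 : Nat.card (PstE H (m + 1) j d)
      = ∑ q : Pst H m (j + 1) d,
          Nat.card {x : ℕ // x ∈ q.1.2 ∧ x ≠ q.1.1 (endv H m)} := by
    rw [Nat.card_congr (equivL3 H m j d), card_sigma']
  have h2 : Nat.card (PstI H m (j + 1) d)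
      = ∑ q : Pst H m (j + 1) d, (if q.1.1 (endv H m) ∈ q.1.2 then 1 else 0) :=
    card_subtype_sum _
  have h3 : ∀ q : Pst H m (j + 1) d,
      Nat.card {x : ℕ // x ∈ q.1.2 ∧ x ≠ q.1.1 (endv H m)} +
        (if q.1.1 (endv H m) ∈ q.1.2 then 1 else 0) = j + 1 := by
    intro q
    have e : {x : ℕ // x ∈ q.1.2 ∧ x ≠ q.1.1 (endv H m)} ≃
        {x : ℕ // x ∈ q.1.2.erase (q.1.1 (endv H m))} :=
      Equiv.subtypeEquivRight (fun x => by rw [Finset.mem_erase]; tauto)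
    rw [Nat.card_congr e, card_coe_finset]
    by_cases hmem : q.1.1 (endv H m) ∈ q.1.2
    · rw [Finset.card_erase_of_mem hmem, q.2.2.1, if_pos hmem]
      omega
    · rw [Finset.erase_eq_of_notMem hmem, q.2.2.1, if_neg hmem]
  rw [h1, h2, ← Finset.sum_add_distrib,
    Finset.sum_congr rfl (fun q _ => h3 q), Finset.sum_const, Finset.card_univ,
    smul_eq_mul, Nat.card_eq_fintype_card, mul_comm]

end L3sec2

end S2
namespace S2
open Sum

section L4sec

variable (H : PtGraph) (m j : ℕ) (d : ℕ →₀ ℕ)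

def indF (S : Finset ℕ) : ℕ →₀ ℕ :=
  ⟨S, fun i => if i ∈ S then 1 else 0, by intro a; by_cases h : a ∈ S <;> simp [h]⟩

@[simp] lemma indF_apply (S : Finset ℕ) (i : ℕ) :
    indF S i = if i ∈ S then 1 else 0 := rfl

@[simp] lemma indF_support (S : Finset ℕ) : (indF S).support = S := rfl

abbrev adSet : Finset ((ℕ →₀ ℕ) × (ℕ →₀ ℕ)) :=
  (Finset.HasAntidiagonal.antidiagonal d).filter
    (fun x : (ℕ →₀ ℕ) × (ℕ →₀ ℕ) => (∀ i, x.1 i ≤ 1) ∧ x.1.support.card = j)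

def toL4 (q : Pst H m j d) : Σ pq : {x // x ∈ adSet j d}, Cset (Mdl H m 0) pq.1.2 :=
  ⟨⟨(indF q.1.2, d - indF q.1.2),
    Finset.mem_filter.mpr
      ⟨Finset.HasAntidiagonal.mem_antidiagonal.mpr
        (add_tsub_cancel_of_le (Finsupp.le_def.mpr (fun i => by
          have hq := q.2.2.2 i
          rw [indF_apply]
          by_cases h : i ∈ q.1.2
          · rw [if_pos h]
            rw [if_pos h] at hq
            omega
          · rw [if_neg h]
            omega))),
       fun i => by rw [indF_apply]; split <;> omega,
       by rw [indF_support]; exact q.2.2.1⟩⟩,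
   ⟨q.1.1, q.2.1, fun i => by
     have hq := q.2.2.2 i
     show cnt q.1.1 i = (d - indF q.1.2) i
     rw [Finsupp.tsub_apply, indF_apply]
     by_cases h : i ∈ q.1.2
     · rw [if_pos h]
       rw [if_pos h] at hq
       omega
     · rw [if_neg h]
       rw [if_neg h] at hq
       omega⟩⟩

def invL4 (p : Σ pq : {x // x ∈ adSet j d}, Cset (Mdl H m 0) pq.1.2) : Pst H m j d :=
  ⟨(p.2.1, p.1.1.1.support), p.2.2.1,
   (Finset.mem_filter.mp p.1.2).2.2,
   fun i => by
     show cnt p.2.1 i + (if i ∈ p.1.1.1.support then 1 else 0) = d i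
     have hd : p.1.1.1 + p.1.1.2 = d :=
       Finset.HasAntidiagonal.mem_antidiagonal.mp (Finset.mem_filter.mp p.1.2).1
     have hdi : p.1.1.1 i + p.1.1.2 i = d i := by rw [← Finsupp.add_apply, hd]
     have hc : cnt p.2.1 i = p.1.1.2 i := p.2.2.2 i
     have hsq1 : p.1.1.1 i ≤ 1 := (Finset.mem_filter.mp p.1.2).2.1 i
     by_cases h : i ∈ p.1.1.1.support
     · rw [if_pos h]
       have h0 : p.1.1.1 i ≠ 0 := Finsupp.mem_support_iff.mp h
       omega
     · rw [if_neg h]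
       have h0 : p.1.1.1 i = 0 := Finsupp.notMem_support_iff.mp h
       omega⟩

lemma invL4_leftinv (q : Pst H m j d) : invL4 H m j d (toL4 H m j d q) = q :=
  Subtype.ext rfl

lemma invL4_inj : Function.Injective (invL4 H m j d) := by
  rintro ⟨⟨⟨d1, d2⟩, hmem⟩, κ, hκ⟩ ⟨⟨⟨d1', d2'⟩, hmem'⟩, κ', hκ'⟩ h
  have hpair := congrArg Subtype.val h
  have hκe : κ = κ' := congrArg Prod.fst hpair
  have hsupp2 : d1.support = d1'.support := congrArg Prod.snd hpair
  subst hκe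
  have hsq1 : ∀ i, d1 i ≤ 1 := (Finset.mem_filter.mp hmem).2.1
  have hsq1' : ∀ i, d1' i ≤ 1 := (Finset.mem_filter.mp hmem').2.1
  have hm1 : d1 + d2 = d := Finset.HasAntidiagonal.mem_antidiagonal.mp (Finset.mem_filter.mp hmem).1
  have hm1' : d1' + d2' = d := Finset.HasAntidiagonal.mem_antidiagonal.mp (Finset.mem_filter.mp hmem').1
  have hd1 : d1 = d1' := by
    apply Finsupp.ext
    intro i
    by_cases hi : i ∈ d1.support
    · have hi' : i ∈ d1'.support := hsupp2 ▸ hi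
      have h1 : d1 i ≠ 0 := Finsupp.mem_support_iff.mp hi
      have h2 : d1' i ≠ 0 := Finsupp.mem_support_iff.mp hi'
      have h3 := hsq1 i
      have h4 := hsq1' i
      omega
    · have hi' : ¬ i ∈ d1'.support := hsupp2 ▸ hi
      rw [Finsupp.notMem_support_iff.mp hi, Finsupp.notMem_support_iff.mp hi']
  subst hd1
  have hd2 : d2 = d2' := by
    apply Finsupp.ext
    intro i
    have e1 : d1 i + d2 i = d i := by rw [← Finsupp.add_apply, hm1]
    have e2 : d1 i + d2' i = d i := by rw [← Finsupp.add_apply, hm1']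
    omega
  subst hd2
  rfl

def equivL4 : Pst H m j d ≃ Σ pq : {x // x ∈ adSet j d}, Cset (Mdl H m 0) pq.1.2 where
  toFun := toL4 H m j d
  invFun := invL4 H m j d
  left_inv := invL4_leftinv H m j d
  right_inv := fun p => invL4_inj H m j d (invL4_leftinv H m j d (invL4 H m j d p))

lemma L4 : (esymm j * csf (Mdl H m 0)) d = (Nat.card (Pst H m j d) : ℚ) := by
  have hN : Nat.card (Pst H m j d) = ∑ pq ∈ adSet j d, Nat.card (Cset (Mdl H m 0) pq.2) := by
    rw [Nat.card_congr (equivL4 H m j d), card_sigma']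
    exact Finset.sum_coe_sort (adSet j d)
      (fun pq => Nat.card (Cset (Mdl H m 0) pq.2))
  show MvPowerSeries.coeff d (esymm j * csf (Mdl H m 0)) = _
  rw [MvPowerSeries.coeff_mul, hN, Finset.sum_filter, Nat.cast_sum]
  refine Finset.sum_congr rfl (fun pq hpq => ?_)
  show (esymm j) pq.1 * (csf (Mdl H m 0)) pq.2 = _
  rw [csf_apply]
  show (if (∀ i, pq.1 i ≤ 1) ∧ pq.1.support.card = j then (1 : ℚ) else 0) *
    (Nat.card (Cset (Mdl H m 0) pq.2) : ℚ) = _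
  split_ifs with h <;> simp

end L4sec

end S2
namespace S2
open Sum

lemma esymm_zero_eq_one : esymm 0 = 1 := by
  apply MvPowerSeries.ext
  intro n
  rw [MvPowerSeries.coeff_one]
  show (if (∀ i, n i ≤ 1) ∧ n.support.card = 0 then (1 : ℚ) else 0) = _
  by_cases hn : n = 0
  · subst hn
    simp
  · rw [if_neg, if_neg hn]
    rintro ⟨-, hc⟩
    exact hn (by rwa [Finset.card_eq_zero, Finsupp.support_eq_empty] at hc)

lemma Rec (H : PtGraph) (k s : ℕ) :
    csf (Mdl H k (s + 1)) = ((s : ℚ) + 1) • csf (Mdl H (k + 1) s)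
      + ((Nat.factorial (s + 1) : ℚ) * (1 - ((s : ℚ) + 1))) •
          (esymm (s + 1) * csf (Mdl H k 0)) := by
  funext d
  have h1 : Nat.card (Cset (Mdl H k (s + 1)) d)
      = (s + 1) * (Nat.factorial s * Nat.card (PstE H k (s + 1) d)) := by
    rw [L1 H k (s + 1) d, Nat.factorial_succ, mul_assoc]
  have h2 := L1 H (k + 1) s d
  have h3 := L3 H k s d
  have h4 := pst_partition H k (s + 1) d
  show (Nat.card (Cset (Mdl H k (s + 1)) d) : ℚ) =
    ((s : ℚ) + 1) * (Nat.card (Cset (Mdl H (k + 1) s) d) : ℚ)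
      + ((Nat.factorial (s + 1) : ℚ) * (1 - ((s : ℚ) + 1))) *
          ((esymm (s + 1) * csf (Mdl H k 0)) d)
  rw [L4 H k (s + 1) d]
  have q1 : (Nat.card (Cset (Mdl H k (s + 1)) d) : ℚ)
      = ((s : ℚ) + 1) * ((Nat.factorial s : ℚ) *
          (Nat.card (PstE H k (s + 1) d) : ℚ)) := by exact_mod_cast h1
  have q2 : (Nat.card (Cset (Mdl H (k + 1) s) d) : ℚ)
      = (Nat.factorial s : ℚ) * (Nat.card (PstE H (k + 1) s d) : ℚ) := by exact_mod_cast h2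
  have q3 : (Nat.card (PstE H (k + 1) s d) : ℚ) + (Nat.card (PstI H k (s + 1) d) : ℚ)
      = ((s : ℚ) + 1) * (Nat.card (Pst H k (s + 1) d) : ℚ) := by exact_mod_cast h3
  have q4 : (Nat.card (Pst H k (s + 1) d) : ℚ)
      = (Nat.card (PstE H k (s + 1) d) : ℚ) + (Nat.card (PstI H k (s + 1) d) : ℚ) := by
    exact_mod_cast h4
  have qf : (Nat.factorial (s + 1) : ℚ) = ((s : ℚ) + 1) * (Nat.factorial s : ℚ) := by
    rw [Nat.factorial_succ]
    push_cast
    ring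
  rw [q1, q2, qf]
  linear_combination (-(((s : ℚ) + 1) * (Nat.factorial s : ℚ))) * q3 +
    (-(((s : ℚ) + 1) * (Nat.factorial s : ℚ))) * q4

lemma main (H : PtGraph) : ∀ (g : ℕ) (k : ℕ),
    csf (Mdl H k g) = (Nat.factorial g : ℚ) •
      ∑ l ∈ Finset.range (g + 1),
        (1 - (l : ℚ)) • (esymm l * csf (Mdl H (k + g - l) 0)) := by
  intro g
  induction g with
  | zero =>
    intro k
    rw [Finset.sum_range_one]
    simp [esymm_zero_eq_one]
  | succ s ih =>
    intro k
    rw [Rec H k s, ih (k + 1)]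
    have hidx : ∀ l ∈ Finset.range (s + 1),
        (1 - (l : ℚ)) • (esymm l * csf (Mdl H (k + 1 + s - l) 0))
          = (1 - (l : ℚ)) • (esymm l * csf (Mdl H (k + (s + 1) - l) 0)) := by
      intro l hl
      rw [show k + 1 + s - l = k + (s + 1) - l from by omega]
    rw [Finset.sum_congr rfl hidx, smul_smul]
    have hfact : ((s : ℚ) + 1) * (Nat.factorial s : ℚ) = (Nat.factorial (s + 1) : ℚ) := by
      rw [Nat.factorial_succ]
      push_cast
      ring
    rw [hfact, mul_smul, ← smul_add]
    conv_rhs => rw [Finset.sum_range_succ]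
    congr 1
    congr 1
    rw [show k + (s + 1) - (s + 1) = k from by omega]
    congr 1
    push_cast
    ring

end S2

/-- KPGs: for a rooted finite graph `H`, `k ≥ 0` and `g ≥ 1`,
`X_{P^k(K_g, H)} = (g-1)! · ∑_{l=0}^{g-1} (1-l) e_l X_{H^{k+g-1-l}}`. -/
theorem statement2 (H : PtGraph) (k g : ℕ) (hg : 1 ≤ g) :
    csf (pathConjoin k (ptClique g) H).graph =
      (Nat.factorial (g - 1) : ℚ) •
        ∑ l ∈ Finset.range g,
          (1 - (l : ℚ)) • (esymm l * csf (H.tail (k + g - 1 - l)).graph) := by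
  obtain ⟨s, rfl⟩ : ∃ s, g = s + 1 := ⟨g - 1, by omega⟩
  rw [S2.iso1 H k (s + 1)]
  have hmdl : csf (S2.Mdl H k (s + 1 - 1)) = csf (S2.Mdl H k s) := rfl
  rw [hmdl, S2.main H s k]
  have hfac : (Nat.factorial (s + 1 - 1) : ℚ) = (Nat.factorial s : ℚ) := rfl
  rw [hfac]
  congr 1
  apply Finset.sum_congr rfl
  intro l hl
  have htail : csf (H.tail (k + (s + 1) - 1 - l)).graph = csf (S2.Mdl H (k + s - l) 0) := by
    rw [S2.iso2 H (k + (s + 1) - 1 - l)]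
    rw [show k + (s + 1) - 1 - l = k + s - l from by omega]
  rw [htail]

end
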